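/- Let d ≥ 2 and n ≥ 1 be integers, let v ∈ ℤ^d have every entry coprime to n, let δ ∈ ℤ^d, and let 1 ≤ k < l ≤ d. Then the coordinate projection π_{k,l} : ℝ^d → ℝ², (u₁,…,u_d) ↦ (u_k, u_l), is injective on L(n,v,δ), and its image satisfies π_{k,l}(L(n,v,δ)) = L(n, (v_k, v_l), (δ_k, δ_l)). -/

import Mathlib

open Finset

/-- Distance from a real number to the nearest integer: w(t) = min over z in ZZ of |t - z|. -/
noncomputable def nid (t : ℝ) : ℝ := ⨅ z : ℤ, |t - (z : ℝ)|

/-- Wrap-around distance on ℝ^d. -/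
noncomputable def wdist {d : ℕ} (u : Fin d → ℝ) : ℝ := Real.sqrt (∑ k, nid (u k) ^ 2)

/-- Lattice-based Latin hypercube design
L(n,v,δ) = { z + i·v/n + δ/n + 1_d/(2n) : z ∈ ℤ^d, i ∈ ℤ } ∩ [0,1]^d. -/
def LHDset (d n : ℕ) (v : Fin d → ℤ) (δ : Fin d → ℝ) : Set (Fin d → ℝ) :=
  {x | (∃ (z : Fin d → ℤ) (i : ℤ),
          x = fun k => (z k : ℝ) + (i : ℝ) * (v k : ℝ) / n + δ k / n + 1 / (2 * n)) ∧
       ∀ k, x k ∈ Set.Icc (0 : ℝ) 1}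

lemma repr_eq (n : ℕ) (hn : 1 ≤ n) (z i vj δj : ℤ) :
    (z:ℝ) + (i:ℝ) * (vj:ℝ) / n + (δj:ℝ) / n + 1 / (2*n)
      = ((((n:ℤ)*z + i*vj + δj : ℤ):ℝ) + 1/2)/n := by
  have h : (n:ℝ) ≠ 0 := Nat.cast_ne_zero.2 (by omega)
  push_cast
  field_simp

lemma key (n : ℕ) (hn : 1 ≤ n) (a b : ℤ) (h : (n:ℤ) ∣ (a - b))
    (ha0 : (0:ℝ) ≤ ((a:ℝ)+1/2)/n) (ha1 : ((a:ℝ)+1/2)/n ≤ 1)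
    (hb0 : (0:ℝ) ≤ ((b:ℝ)+1/2)/n) (hb1 : ((b:ℝ)+1/2)/n ≤ 1) : a = b := by
  have hn' : (0:ℝ) < n := by exact_mod_cast Nat.pos_of_ne_zero (by omega)
  have bnd : ∀ c : ℤ, (0:ℝ) ≤ ((c:ℝ)+1/2)/n → ((c:ℝ)+1/2)/n ≤ 1 → 0 ≤ c ∧ c < n := by
    intro c h0 h1
    have h0' : (0:ℝ) ≤ (c:ℝ)+1/2 := by
      have := mul_nonneg h0 hn'.le
      rwa [div_mul_cancel₀ _ hn'.ne'] at this
    have h1' : (c:ℝ)+1/2 ≤ n := (div_le_one hn').1 h1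
    constructor
    · have h2 : (-1:ℝ) < (c:ℝ) := by linarith
      have h3 : (-1:ℤ) < c := by exact_mod_cast h2
      omega
    · have : (c:ℝ) < n := by linarith
      exact_mod_cast this
  obtain ⟨ha0', ha1'⟩ := bnd a ha0 ha1
  obtain ⟨hb0', hb1'⟩ := bnd b hb0 hb1
  have := Int.eq_zero_of_abs_lt_dvd h (abs_lt.2 ⟨by omega, by omega⟩)
  omega

/-- the coordinate projection onto coordinates k < l is injective on
L(n,v,δ), and the image is L(n, (v_k, v_l), (δ_k, δ_l)). -/
theorem stmt_11 (d n : ℕ) (hd : 2 ≤ d) (hn : 1 ≤ n) (v δ : Fin d → ℤ)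
    (hco : ∀ k, IsCoprime (v k) (n : ℤ)) (k l : Fin d) (hkl : k < l) :
    Set.InjOn (fun x : Fin d → ℝ => ![x k, x l]) (LHDset d n v (fun k => (δ k : ℝ))) ∧
    (fun x : Fin d → ℝ => ![x k, x l]) '' (LHDset d n v (fun k => (δ k : ℝ)))
      = LHDset 2 n ![v k, v l] (fun j => ((![δ k, δ l] j : ℤ) : ℝ)) := by
  have hn0 : (n:ℝ) ≠ 0 := Nat.cast_ne_zero.2 (by omega)
  have hnZ : (0:ℤ) < (n:ℤ) := by exact_mod_cast Nat.pos_of_ne_zero (by omega)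
  constructor
  · -- injectivity
    intro x hx y hy hxy
    obtain ⟨⟨z, i, hxz⟩, hxI⟩ := hx
    obtain ⟨⟨w, j, hyw⟩, hyI⟩ := hy
    have hk : x k = y k := by
      have := congrFun hxy 0
      simpa using this
    have hx' : ∀ m, x m = ((((n:ℤ)*z m + i*v m + δ m : ℤ):ℝ) + 1/2)/n := by
      intro m; rw [hxz]; exact repr_eq n hn (z m) i (v m) (δ m)
    have hy' : ∀ m, y m = ((((n:ℤ)*w m + j*v m + δ m : ℤ):ℝ) + 1/2)/n := by
      intro m; rw [hyw]; exact repr_eq n hn (w m) j (v m) (δ m)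
    have hak : (n:ℤ)*z k + i*v k + δ k = (n:ℤ)*w k + j*v k + δ k := by
      have h1 := hx' k
      rw [hk, hy' k] at h1
      field_simp at h1
      have h1' : ((n:ℤ) * w k + j * v k + δ k) * 2 + 1 = 2 * ((n:ℤ) * z k + i * v k + δ k) + 1 := by exact_mod_cast h1
      omega
    have hdvd : (n:ℤ) ∣ (i - j) := by
      have h2 : (i - j) * v k = (n:ℤ) * (w k - z k) := by linear_combination hak
      exact (hco k).symm.dvd_of_dvd_mul_right ⟨w k - z k, h2⟩
    obtain ⟨c, hc⟩ := hdvd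
    funext m
    have hd2 : ((n:ℤ)*z m + i*v m + δ m) - ((n:ℤ)*w m + j*v m + δ m)
        = (n:ℤ) * (z m - w m + c * v m) := by linear_combination (v m) * hc
    have hb1 := hxI m; rw [hx' m, Set.mem_Icc] at hb1
    have hb2 := hyI m; rw [hy' m, Set.mem_Icc] at hb2
    have heq := key n hn _ _ ⟨_, hd2⟩ hb1.1 hb1.2 hb2.1 hb2.2
    rw [hx' m, hy' m, heq]
  · -- image
    ext y
    simp only [Set.mem_image]
    constructor
    · rintro ⟨x, ⟨⟨z, i, hxz⟩, hxI⟩, rfl⟩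
      refine ⟨⟨![z k, z l], i, ?_⟩, ?_⟩
      · funext m
        fin_cases m <;> simp [hxz]
      · intro m
        fin_cases m
        · simpa using hxI k
        · simpa using hxI l
    · rintro ⟨⟨w, i, hyw⟩, hyI⟩
      have hy' : ∀ m : Fin 2, y m
          = ((((n:ℤ)*w m + i*(![v k, v l] m) + (![δ k, δ l] m) : ℤ):ℝ) + 1/2)/n := by
        intro m; rw [hyw]; exact repr_eq n hn (w m) i (![v k, v l] m) (![δ k, δ l] m)
      set x : Fin d → ℝ := fun m => ((((i * v m + δ m) % n : ℤ):ℝ) + 1/2)/n with hxdef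
      have hxbnd : ∀ m, (0:ℝ) ≤ x m ∧ x m ≤ 1 := by
        intro m
        have hm0 : 0 ≤ (i * v m + δ m) % n := Int.emod_nonneg _ hnZ.ne'
        have hm1 : (i * v m + δ m) % n < n := Int.emod_lt_of_pos _ hnZ
        have h0 : (0:ℝ) ≤ (((i * v m + δ m) % n : ℤ):ℝ) := by exact_mod_cast hm0
        have h1 : (((i * v m + δ m) % n : ℤ):ℝ) + 1 ≤ (n:ℝ) := by
          exact_mod_cast hm1
        have hnp : (0:ℝ) < n := lt_of_le_of_ne (by positivity) (Ne.symm hn0)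
        constructor
        · apply div_nonneg (by linarith) hnp.le
        · rw [hxdef]
          simp only
          rw [div_le_one hnp]; linarith
      refine ⟨x, ⟨⟨fun m => -((i * v m + δ m) / n), i, ?_⟩, fun m => Set.mem_Icc.2 (hxbnd m)⟩, ?_⟩
      · funext m
        rw [repr_eq n hn]
        have h2 : (i * v m + δ m) % (n:ℤ)
            = (n:ℤ) * (-((i * v m + δ m) / n)) + i * v m + δ m := by
          rw [Int.emod_def]; ring
        rw [hxdef]
        simp only
        rw [h2]
      · funext m
        have key2 : ∀ (j0 : Fin 2) (m0 : Fin d), ![v k, v l] j0 = v m0 → ![δ k, δ l] j0 = δ m0 →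
            x m0 = y j0 := by
          intro j0 m0 hv hδ
          have hm0 : 0 ≤ (i * v m0 + δ m0) % n := Int.emod_nonneg _ hnZ.ne'
          have hb2 := hyI j0; rw [hy' j0, Set.mem_Icc] at hb2
          have hbx := hxbnd m0
          have hx2 : x m0 = ((((i * v m0 + δ m0) % n : ℤ):ℝ) + 1/2)/n := rfl
          rw [hx2] at hbx
          have hdd : ((i * v m0 + δ m0) % n) - ((n:ℤ)*w j0 + i*(![v k, v l] j0) + (![δ k, δ l] j0))
              = (n:ℤ) * (-((i * v m0 + δ m0) / n) - w j0) := by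
            rw [hv, hδ, Int.emod_def]; ring
          have heq := key n hn _ _ ⟨_, hdd⟩ hbx.1 hbx.2 hb2.1 hb2.2
          rw [hx2, hy' j0, heq]
        fin_cases m
        · simpa using key2 0 k (by simp) (by simp)
        · simpa using key2 1 l (by simp) (by simp)
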